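/- For every finite word w over a finite alphabet, the number of distinct nonempty palindromic factors (contiguous subwords) of w is at most |w|. -/

import Mathlib

private lemma exists_take_suffix {A : Type*} (w p : List A) (h : p <:+: w) :
    ∃ n, n ≤ w.length ∧ p <:+ w.take n := by
  obtain ⟨s, t, rfl⟩ := h
  refine ⟨s.length + p.length, by simp [List.length_append], ?_⟩
  have : (s ++ p ++ t).take (s.length + p.length) = s ++ p := by
    rw [List.append_assoc, List.take_append]
    simp [List.take_append, List.take_of_length_le]
  rw [this]
  exact List.suffix_append s p

private lemma aux_contra {A : Type*} [DecidableEq A] (w p q : List A) (n : ℕ)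
    (hp_pal : p.reverse = p) (hq_pal : q.reverse = q) (hpq : p <:+ q) (hne : p ≠ q)
    (hq : q <:+ w.take n)
    (hmin : ∀ m < n, ¬ p <:+ w.take m) : False := by
  have hlt : p.length < q.length := by
    rcases lt_or_eq_of_le hpq.length_le with h | h
    · exact h
    · exact absurd (hpq.sublist.eq_of_length h) hne
  -- p is also a prefix of q since q is a palindrome and p is a palindrome suffix...
  have hpre : p <+: q := by
    have := List.reverse_prefix.mpr hpq
    rwa [hp_pal, hq_pal] at this
  obtain ⟨u, hu⟩ := hq
  obtain ⟨r, hr⟩ := hpre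
  have hlen : (w.take n).length = u.length + q.length := by
    rw [← hu]; simp
  have hn_ge : u.length + q.length ≤ n := by
    have := List.length_take_le n w
    omega
  set m := u.length + p.length with hm
  have hmn : m < n := by omega
  apply hmin m hmn
  have : w.take m = u ++ p := by
    have h1 : (w.take n).take m = w.take m := by
      rw [List.take_take]; congr 1; omega
    rw [← h1, ← hu, ← hr, ← List.append_assoc]
    rw [List.take_append]
    simp [List.take_append, List.take_of_length_le, hm]
  rw [this]
  exact List.suffix_append u p

theorem palindromic_factors_card_le_length {A : Type*} [Fintype A] [DecidableEq A]
    (w : List A) :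
    ((w.sublists.filter (fun p => p ≠ [] ∧ p.reverse = p ∧ p <:+: w)).dedup).length
      ≤ w.length := by
  set L := w.sublists.filter (fun p => p ≠ [] ∧ p.reverse = p ∧ p <:+: w) with hL
  have hmem : ∀ p ∈ L, p ≠ [] ∧ p.reverse = p ∧ p <:+: w := by
    intro p hp
    rw [hL, List.mem_filter] at hp
    simpa using hp.2
  have hex : ∀ p ∈ L, ∃ n, p <:+ w.take n := by
    intro p hp
    obtain ⟨n, _, hn⟩ := exists_take_suffix w p (hmem p hp).2.2
    exact ⟨n, hn⟩
  classical
  -- the counting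
  have h1 : L.dedup.length = L.toFinset.card := (List.card_toFinset L).symm
  rw [h1]
  have h2 : w.length = (Finset.Icc 1 w.length).card := by simp
  rw [h2]
  apply Finset.card_le_card_of_injOn
    (fun p => if h : p ∈ L then Nat.find (hex p h) else 0)
  · intro p hp
    rw [Finset.mem_coe, List.mem_toFinset] at hp
    simp only [hp, dif_pos]
    obtain ⟨hne, hpal, hinf⟩ := hmem p hp
    obtain ⟨n, hn_le, hn⟩ := exists_take_suffix w p hinf
    have hfind := Nat.find_spec (hex p hp)
    rw [Finset.mem_coe, Finset.mem_Icc]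
    constructor
    · by_contra h
      push_neg at h
      interval_cases (Nat.find (hex p hp))
      · simp at hfind
        exact hne hfind
    · exact le_trans (Nat.find_min' _ hn) hn_le
  · intro p hp q hq heq
    simp only [Finset.mem_coe, List.mem_toFinset] at hp hq
    simp only [hp, hq, dif_pos] at heq
    by_contra hne
    have hEQ : Nat.find (hex p hp) = Nat.find (hex q hq) := heq
    have hps : p <:+ w.take (Nat.find (hex p hp)) := Nat.find_spec (hex p hp)
    have hqs : q <:+ w.take (Nat.find (hex p hp)) := by
      rw [hEQ]; exact Nat.find_spec (hex q hq)
    rcases List.suffix_or_suffix_of_suffix hps hqs with h | h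
    · exact aux_contra w p q _ (hmem p hp).2.1 (hmem q hq).2.1 h hne hqs
        (fun m hm => Nat.find_min (hex p hp) hm)
    · exact aux_contra w q p _ (hmem q hq).2.1 (hmem p hp).2.1 h (Ne.symm hne) hps
        (fun m hm => by rw [hEQ] at hm; exact Nat.find_min (hex q hq) hm)
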